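/- Let a camera move with C² rotation R(t) ∈ SO(3) and translation 𝑻(t), R(0) = I, 𝑻(0) = 0, and let Γʷ(t) be a C² moving 3D point with camera coordinates Γ(t) = R(t)Γʷ(t) + 𝑻(t), depth ρ = ⟨e₃, Γ⟩ > 0, and image point γ = Γ/ρ. With Ω̂ = R′(0)R(0)ᵀ, Ω̂_t = (d/dt)(R′(t)R(t)ᵀ)|₀, V = 𝑻′(0), and V_t = 𝑻″(0), the second-order derivatives at t = 0 satisfy: ρ_tt = ρ⟨e₃, (Ω̂² + Ω̂_t)γ⟩ + 2⟨e₃, Ω̂Γʷ_t⟩ + ⟨e₃, Γʷ_tt⟩ + ⟨e₃, V_t⟩, and γ_tt = (Ω̂² + Ω̂_t)γ + (2/ρ)Ω̂Γʷ_t + (1/ρ)Γʷ_tt + (1/ρ)V_t − (2ρ_t/ρ)γ_t − (ρ_tt/ρ)γ. -/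

import Mathlib

open scoped RealInnerProductSpace

attribute [local instance] Matrix.frobeniusNormedAddCommGroup Matrix.frobeniusNormedSpace

noncomputable section

/-- ℝ³ with the Euclidean inner product. -/
abbrev V3 : Type := EuclideanSpace ℝ (Fin 3)

/-- The third standard basis vector e₃ = (0,0,1). -/
def e3 : V3 := WithLp.toLp 2 ![0, 0, 1]

/-- Matrix–vector multiplication, valued in ℝ³ with the Euclidean structure. -/
def mulV (A : Matrix (Fin 3) (Fin 3) ℝ) (v : V3) : V3 := WithLp.toLp 2 (A.mulVec v)

lemma mulV_one (v : V3) : mulV 1 v = v := by simp [mulV]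

lemma mulV_smul (A : Matrix (Fin 3) (Fin 3) ℝ) (c : ℝ) (v : V3) :
    mulV A (c • v) = c • mulV A v := by simp [mulV, Matrix.mulVec_smul]

/-- `mulV` as a bilinear map. -/
def mulVB : Matrix (Fin 3) (Fin 3) ℝ →ₗ[ℝ] V3 →ₗ[ℝ] V3 :=
  LinearMap.mk₂ ℝ mulV
    (fun A B v => by simp [mulV, Matrix.add_mulVec])
    (fun c A v => by simp [mulV, Matrix.smul_mulVec])
    (fun A u v => by
      ext i
      simp [mulV, Matrix.mulVec, PiLp.add_apply])
    (fun c A v => by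
      ext i
      simp [mulV, Matrix.mulVec, PiLp.smul_apply])

/-- `mulV` as a continuous bilinear map. -/
def mulVL : Matrix (Fin 3) (Fin 3) ℝ →L[ℝ] V3 →L[ℝ] V3 :=
  LinearMap.toContinuousLinearMap
    ((LinearMap.toContinuousLinearMap : (V3 →ₗ[ℝ] V3) ≃ₗ[ℝ] (V3 →L[ℝ] V3)).toLinearMap.comp mulVB)

@[simp] lemma mulVL_apply (A : Matrix (Fin 3) (Fin 3) ℝ) (v : V3) : mulVL A v = mulV A v := rfl

/-- Matrix multiplication as a continuous bilinear map (w.r.t. the Frobenius norm). -/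
def mulML : Matrix (Fin 3) (Fin 3) ℝ →L[ℝ] Matrix (Fin 3) (Fin 3) ℝ →L[ℝ] Matrix (Fin 3) (Fin 3) ℝ :=
  LinearMap.toContinuousLinearMap
    ((LinearMap.toContinuousLinearMap :
        (Matrix (Fin 3) (Fin 3) ℝ →ₗ[ℝ] Matrix (Fin 3) (Fin 3) ℝ) ≃ₗ[ℝ]
        (Matrix (Fin 3) (Fin 3) ℝ →L[ℝ] Matrix (Fin 3) (Fin 3) ℝ)).toLinearMap.comp
      (LinearMap.mk₂ ℝ (· * ·) add_mul (fun c A B => smul_mul_assoc c A B) mul_add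
        (fun c A B => mul_smul_comm c A B)))

@[simp] lemma mulML_apply (A B : Matrix (Fin 3) (Fin 3) ℝ) : mulML A B = A * B := rfl

/-- Transpose as a continuous linear map. -/
def transL : Matrix (Fin 3) (Fin 3) ℝ →L[ℝ] Matrix (Fin 3) (Fin 3) ℝ :=
  LinearMap.toContinuousLinearMap
    { toFun := Matrix.transpose
      map_add' := Matrix.transpose_add
      map_smul' := Matrix.transpose_smul }

@[simp] lemma transL_apply (A : Matrix (Fin 3) (Fin 3) ℝ) : transL A = A.transpose := rfl

lemma hasDerivAt_mulV {A : ℝ → Matrix (Fin 3) (Fin 3) ℝ} {A' : Matrix (Fin 3) (Fin 3) ℝ}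
    {v : ℝ → V3} {v' : V3} {t : ℝ} (hA : HasDerivAt A A' t) (hv : HasDerivAt v v' t) :
    HasDerivAt (fun s => mulV (A s) (v s)) (mulV A' (v t) + mulV (A t) v') t := by
  have h1 : HasDerivAt (fun s => mulVL (A s)) (mulVL A') t :=
    mulVL.hasFDerivAt.comp_hasDerivAt t hA
  simpa using h1.clm_apply hv

lemma hasDerivAt_matmul {A B : ℝ → Matrix (Fin 3) (Fin 3) ℝ} {A' B' : Matrix (Fin 3) (Fin 3) ℝ}
    {t : ℝ} (hA : HasDerivAt A A' t) (hB : HasDerivAt B B' t) :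
    HasDerivAt (fun s => A s * B s) (A' * B t + A t * B') t := by
  letI : NormedRing (Matrix (Fin 3) (Fin 3) ℝ) := Matrix.frobeniusNormedRing
  letI : NormedAlgebra ℝ (Matrix (Fin 3) (Fin 3) ℝ) := Matrix.frobeniusNormedAlgebra
  exact hA.mul hB

lemma hasDerivAt_trans {A : ℝ → Matrix (Fin 3) (Fin 3) ℝ} {A' : Matrix (Fin 3) (Fin 3) ℝ}
    {t : ℝ} (hA : HasDerivAt A A' t) :
    HasDerivAt (fun s => (A s).transpose) A'.transpose t := by
  have h := transL.hasFDerivAt.comp_hasDerivAt t hA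
  exact h

lemma hasDerivAt_inner_e3 {f : ℝ → V3} {f' : V3} {t : ℝ} (hf : HasDerivAt f f' t) :
    HasDerivAt (fun s => (⟪e3, f s⟫ : ℝ)) ⟪e3, f'⟫ t := by
  have h := (innerSL ℝ e3).hasFDerivAt.comp_hasDerivAt t hf
  exact h

/-- second-order differential relations for a moving 3D point seen
by a moving camera: at `t = 0`,
`ρ_tt = ρ⟨e₃,(Ω̂² + Ω̂_t)γ⟩ + 2⟨e₃,Ω̂Γʷ_t⟩ + ⟨e₃,Γʷ_tt⟩ + ⟨e₃,V_t⟩` and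
`γ_tt = (Ω̂² + Ω̂_t)γ + (2/ρ)Ω̂Γʷ_t + (1/ρ)Γʷ_tt + (1/ρ)V_t − (2ρ_t/ρ)γ_t − (ρ_tt/ρ)γ`. -/
theorem moving_point_second_order
    (R R' R'' : ℝ → Matrix (Fin 3) (Fin 3) ℝ)
    (Ωht : Matrix (Fin 3) (Fin 3) ℝ)
    (Tr Tr' Tr'' : ℝ → V3)
    (Γw Γw' Γw'' : ℝ → V3)
    (Γ : ℝ → V3) (ρ ρ' ρ'' : ℝ → ℝ) (γ γ' γ'' : ℝ → V3)
    -- camera motion: R(t) ∈ SO(3), C², with R(0) = I, 𝑻(0) = 0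
    (hRorth : ∀ t, R t * (R t).transpose = 1)
    (hRdet : ∀ t, (R t).det = 1)
    (hR' : ∀ t, HasDerivAt R (R' t) t)
    (hR'' : ∀ t, HasDerivAt R' (R'' t) t)
    (hR0 : R 0 = 1)
    -- Ω̂_t is the derivative at 0 of the angular-velocity matrix t ↦ R′(t)R(t)ᵀ
    (hΩht : HasDerivAt (fun t => R' t * (R t).transpose) Ωht 0)
    (hTr' : ∀ t, HasDerivAt Tr (Tr' t) t)
    (hTr'' : ∀ t, HasDerivAt Tr' (Tr'' t) t)
    (hTr0 : Tr 0 = 0)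
    -- moving point: C² in world coordinates
    (hΓw' : ∀ t, HasDerivAt Γw (Γw' t) t)
    (hΓw'' : ∀ t, HasDerivAt Γw' (Γw'' t) t)
    -- camera coordinates, depth and image
    (hΓ : ∀ t, Γ t = mulV (R t) (Γw t) + Tr t)
    (hρ : ∀ t, ρ t = ⟪e3, Γ t⟫)
    (hρpos : ∀ t, 0 < ρ t)
    (hρ' : ∀ t, HasDerivAt ρ (ρ' t) t)
    (hρ'' : ∀ t, HasDerivAt ρ' (ρ'' t) t)
    (hγ : ∀ t, γ t = (ρ t)⁻¹ • Γ t)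
    (hγ' : ∀ t, HasDerivAt γ (γ' t) t)
    (hγ'' : ∀ t, HasDerivAt γ' (γ'' t) t) :
    -- conclusion at t = 0, with Ω̂ = R′(0)R(0)ᵀ, V = 𝑻′(0), V_t = 𝑻″(0)
    (let Ωh := R' 0 * (R 0).transpose
     ρ'' 0 = ρ 0 * ⟪e3, mulV (Ωh * Ωh + Ωht) (γ 0)⟫
          + 2 * ⟪e3, mulV Ωh (Γw' 0)⟫ + ⟪e3, Γw'' 0⟫ + ⟪e3, Tr'' 0⟫
     ∧ γ'' 0 = mulV (Ωh * Ωh + Ωht) (γ 0)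
          + (2 / ρ 0) • mulV Ωh (Γw' 0)
          + (ρ 0)⁻¹ • Γw'' 0
          + (ρ 0)⁻¹ • Tr'' 0
          - (2 * ρ' 0 / ρ 0) • γ' 0
          - (ρ'' 0 / ρ 0) • γ 0) := by
  have hρ0 : ρ 0 ≠ 0 := (hρpos 0).ne'
  -- skew-symmetry of R'(0)
  have hskew : (R' 0).transpose = -(R' 0) := by
    have h1 : HasDerivAt (fun t => R t * (R t).transpose)
        (R' 0 * (R 0).transpose + R 0 * (R' 0).transpose) 0 :=
      hasDerivAt_matmul (hR' 0) (hasDerivAt_trans (hR' 0))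
    have h2 : HasDerivAt (fun t => R t * (R t).transpose) 0 0 := by
      have hc : (fun t => R t * (R t).transpose) = fun _ => (1 : Matrix (Fin 3) (Fin 3) ℝ) :=
        funext hRorth
      rw [hc]; exact hasDerivAt_const 0 1
    have h3 := h1.unique h2
    rw [hR0, Matrix.transpose_one, mul_one, one_mul] at h3
    rw [add_comm] at h3
    exact eq_neg_of_add_eq_zero_left h3
  -- value of Ωht
  have hΩval : Ωht = R'' 0 - R' 0 * R' 0 := by
    have h1 : HasDerivAt (fun t => R' t * (R t).transpose)
        (R'' 0 * (R 0).transpose + R' 0 * (R' 0).transpose) 0 :=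
      hasDerivAt_matmul (hR'' 0) (hasDerivAt_trans (hR' 0))
    have h2 := hΩht.unique h1
    rw [hR0, Matrix.transpose_one, mul_one, hskew, mul_neg, ← sub_eq_add_neg] at h2
    exact h2
  have hR''0 : R'' 0 = R' 0 * R' 0 + Ωht := by rw [hΩval]; abel
  -- Γ and its derivative from the camera formula
  have hΓfun : Γ = fun t => mulV (R t) (Γw t) + Tr t := funext hΓ
  have hΓd : ∀ t, HasDerivAt Γ
      (mulV (R' t) (Γw t) + mulV (R t) (Γw' t) + Tr' t) t := by
    intro t
    rw [hΓfun]
    exact (hasDerivAt_mulV (hR' t) (hΓw' t)).add (hTr' t)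
  -- Γ = ρ • γ
  have hΓργ : ∀ t, Γ t = ρ t • γ t := fun t => by
    rw [hγ t, smul_smul, mul_inv_cancel₀ (hρpos t).ne', one_smul]
  have hΓfun2 : Γ = fun t => ρ t • γ t := funext hΓργ
  have hΓd2 : ∀ t, HasDerivAt Γ (ρ t • γ' t + ρ' t • γ t) t := by
    intro t; rw [hΓfun2]; exact (hρ' t).smul (hγ' t)
  -- first-order identity, valid at every t
  have key : ∀ t, ρ t • γ' t + ρ' t • γ t
      = mulV (R' t) (Γw t) + mulV (R t) (Γw' t) + Tr' t :=
    fun t => (hΓd2 t).unique (hΓd t)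
  have hkeyfun : (fun t => ρ t • γ' t + ρ' t • γ t)
      = fun t => mulV (R' t) (Γw t) + mulV (R t) (Γw' t) + Tr' t := funext key
  -- differentiate the first-order identity at 0
  have hL : HasDerivAt (fun t => ρ t • γ' t + ρ' t • γ t)
      ((ρ 0 • γ'' 0 + ρ' 0 • γ' 0) + (ρ' 0 • γ' 0 + ρ'' 0 • γ 0)) 0 :=
    ((hρ' 0).smul (hγ'' 0)).add ((hρ'' 0).smul (hγ' 0))
  have hRd : HasDerivAt (fun t => mulV (R' t) (Γw t) + mulV (R t) (Γw' t) + Tr' t)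
      ((mulV (R'' 0) (Γw 0) + mulV (R' 0) (Γw' 0))
        + (mulV (R' 0) (Γw' 0) + mulV (R 0) (Γw'' 0)) + Tr'' 0) 0 :=
    ((hasDerivAt_mulV (hR'' 0) (hΓw' 0)).add (hasDerivAt_mulV (hR' 0) (hΓw'' 0))).add (hTr'' 0)
  have hRd' : HasDerivAt (fun t => ρ t • γ' t + ρ' t • γ t)
      ((mulV (R'' 0) (Γw 0) + mulV (R' 0) (Γw' 0))
        + (mulV (R' 0) (Γw' 0) + mulV (R 0) (Γw'' 0)) + Tr'' 0) 0 := by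
    rw [hkeyfun]; exact hRd
  have E := hL.unique hRd'
  rw [hR0, mulV_one] at E
  -- Γw(0) = ρ(0) • γ(0)
  have hΓw0 : Γw 0 = ρ 0 • γ 0 := by
    have h := hΓ 0
    rw [hR0, mulV_one, hTr0, add_zero] at h
    rw [← h]; exact hΓργ 0
  rw [hΓw0, mulV_smul] at E
  -- value of ρ' and ρ''
  have hρfun : ρ = fun t => ⟪e3, Γ t⟫ := funext hρ
  have hρ'val : ∀ t, ρ' t = ⟪e3, mulV (R' t) (Γw t) + mulV (R t) (Γw' t) + Tr' t⟫ := by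
    intro t
    refine (hρ' t).unique ?_
    rw [hρfun]; exact hasDerivAt_inner_e3 (hΓd t)
  have hρ'fun : ρ' = fun t => ⟪e3, mulV (R' t) (Γw t) + mulV (R t) (Γw' t) + Tr' t⟫ :=
    funext hρ'val
  have hρ''val : ρ'' 0 = ⟪e3, (mulV (R'' 0) (Γw 0) + mulV (R' 0) (Γw' 0))
        + (mulV (R' 0) (Γw' 0) + mulV (R 0) (Γw'' 0)) + Tr'' 0⟫ := by
    refine (hρ'' 0).unique ?_
    rw [hρ'fun]; exact hasDerivAt_inner_e3 hRd
  rw [hR0, mulV_one, hΓw0, mulV_smul] at hρ''val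
  refine ⟨?_, ?_⟩
  · -- depth equation
    rw [hρ''val, hR0, Matrix.transpose_one, mul_one, ← hR''0]
    simp only [inner_add_right, real_inner_smul_right]
    ring
  · -- image equation
    rw [hR0, Matrix.transpose_one, mul_one, ← hR''0]
    have hsolve : ρ 0 • γ'' 0 = ρ 0 • mulV (R'' 0) (γ 0) + (2 : ℝ) • mulV (R' 0) (Γw' 0)
        + Γw'' 0 + Tr'' 0 - (2 * ρ' 0) • γ' 0 - ρ'' 0 • γ 0 := by
      linear_combination (norm := module) E
    refine smul_right_injective V3 hρ0 ?_
    beta_reduce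
    rw [hsolve]
    match_scalars <;> field_simp <;> ring
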